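/- If F ⊆ Sym²(ℝⁿ) is a closed set satisfying the positivity condition F + P ⊆ F (where P is the cone of positive semidefinite matrices), then F equals the closure of its interior: F = closure(interior F), provided F is nonempty and not all of Sym²(ℝⁿ). -/

import Mathlib

open Topology Pointwise

abbrev SymMat (n : ℕ) : Type := selfAdjoint (Matrix (Fin n) (Fin n) ℝ)

def PSD (n : ℕ) : Set (SymMat n) := {A | (A : Matrix (Fin n) (Fin n) ℝ).PosSemidef}

def dual {n : ℕ} (F : Set (SymMat n)) : Set (SymMat n) := {A | -A ∉ interior F}

open Matrix in
lemma quad_bound (n : ℕ) (D : Matrix (Fin n) (Fin n) ℝ) (δ : ℝ)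
    (h : ∀ i j, |D i j| ≤ δ) (x : Fin n → ℝ) :
    |x ⬝ᵥ D *ᵥ x| ≤ δ * (∑ i, |x i|) ^ 2 := by
  have hq : x ⬝ᵥ D *ᵥ x = ∑ i, ∑ j, x i * (D i j * x j) := by
    simp [dotProduct, Matrix.mulVec, Finset.mul_sum]
  rw [hq]
  calc |∑ i, ∑ j, x i * (D i j * x j)| ≤ ∑ i, ∑ j, |x i * (D i j * x j)| := by
        refine (Finset.abs_sum_le_sum_abs _ _).trans ?_
        gcongr with i _
        exact Finset.abs_sum_le_sum_abs _ _
    _ ≤ ∑ i, ∑ j, |x i| * (δ * |x j|) := by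
        refine Finset.sum_le_sum fun i _ => Finset.sum_le_sum fun j _ => ?_
        rw [abs_mul, abs_mul]
        exact mul_le_mul_of_nonneg_left
          (mul_le_mul_of_nonneg_right (h i j) (abs_nonneg _)) (abs_nonneg _)
    _ = δ * (∑ i, |x i|) ^ 2 := by
        rw [sq, Finset.sum_mul_sum, Finset.mul_sum]
        refine Finset.sum_congr rfl fun i _ => ?_
        rw [Finset.mul_sum]
        exact Finset.sum_congr rfl fun j _ => by ring

open Matrix in
lemma psd_of_near (n : ℕ) (ε : ℝ) (hε : 0 < ε) (M : Matrix (Fin n) (Fin n) ℝ)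
    (hM : M.IsHermitian)
    (hent : ∀ i j, |(M - ε • 1) i j| ≤ ε / (n + 1)) : M.PosSemidef := by
  refine posSemidef_iff_dotProduct_mulVec.mpr ⟨hM, fun x => ?_⟩
  have hD := quad_bound n (M - ε • 1) (ε / (n + 1)) hent x
  have hM' : x ⬝ᵥ M *ᵥ x = ε * (∑ i, x i ^ 2) + x ⬝ᵥ (M - ε • 1) *ᵥ x := by
    have h1 : (M - ε • 1) *ᵥ x = M *ᵥ x - ε • x := by
      rw [Matrix.sub_mulVec, Matrix.smul_mulVec, Matrix.one_mulVec]
    have h2 : x ⬝ᵥ x = ∑ i, x i ^ 2 := by simp [dotProduct, sq]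
    rw [h1, dotProduct_sub, dotProduct_smul, h2, smul_eq_mul]
    ring
  have hS : (0:ℝ) ≤ ∑ i, x i ^ 2 := Finset.sum_nonneg fun i _ => sq_nonneg _
  have hcs : (∑ i, |x i|) ^ 2 ≤ (n : ℝ) * ∑ i, x i ^ 2 := by
    have := sq_sum_le_card_mul_sum_sq (s := (Finset.univ : Finset (Fin n)))
      (f := fun i => |x i|)
    simpa [sq_abs] using this
  set δ : ℝ := ε / (n + 1) with hδdef
  have hδ : 0 < δ := by positivity
  have hδn : δ * n ≤ ε := by
    rw [hδdef, div_mul_eq_mul_div, div_le_iff₀ (by positivity)]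
    nlinarith
  have key : 0 ≤ x ⬝ᵥ M *ᵥ x := by
    have h1 : δ * (∑ i, |x i|) ^ 2 ≤ δ * ((n : ℝ) * ∑ i, x i ^ 2) := by
      exact mul_le_mul_of_nonneg_left hcs hδ.le
    have h2 : δ * ((n : ℝ) * ∑ i, x i ^ 2) = (δ * n) * ∑ i, x i ^ 2 := by ring
    have h3 : (δ * n) * ∑ i, x i ^ 2 ≤ ε * ∑ i, x i ^ 2 :=
      mul_le_mul_of_nonneg_right hδn hS
    have h4 := neg_abs_le (x ⬝ᵥ (M - ε • 1) *ᵥ x)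
    linarith
  simpa using key

open Matrix in
lemma smul_one_mem_interior_PSD (n : ℕ) (ε : ℝ) (hε : 0 < ε) :
    (⟨ε • 1, by
      simp only [selfAdjoint.mem_iff, star_smul, star_one, star_trivial]⟩ : SymMat n) ∈
      interior (PSD n) := by
  rw [mem_interior]
  refine ⟨⋂ i, ⋂ j, {B : SymMat n |
      |(B : Matrix (Fin n) (Fin n) ℝ) i j - (ε • 1 : Matrix (Fin n) (Fin n) ℝ) i j|
        < ε / (n + 1)}, ?_, ?_, ?_⟩
  · intro B hB
    simp only [Set.mem_iInter, Set.mem_setOf_eq] at hB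
    refine psd_of_near n ε hε _ ?_ ?_
    · exact B.prop
    · intro i j
      have := hB i j
      simpa [Matrix.sub_apply] using this.le
  · refine isOpen_iInter_of_finite fun i => isOpen_iInter_of_finite fun j => ?_
    have hc : Continuous (fun B : SymMat n =>
        |(B : Matrix (Fin n) (Fin n) ℝ) i j - (ε • 1 : Matrix (Fin n) (Fin n) ℝ) i j|) := by
      have h1 : Continuous (fun M : Matrix (Fin n) (Fin n) ℝ => M i j) :=
        (continuous_apply j).comp (continuous_apply i)
      exact ((h1.comp continuous_subtype_val).sub continuous_const).abs
    exact isOpen_Iio.preimage hc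
  · simp only [Set.mem_iInter, Set.mem_setOf_eq]
    intro i j
    simp only [sub_self, abs_zero]
    positivity

theorem stmt0 (n : ℕ) (F : Set (SymMat n)) (hcl : IsClosed F)
    (hpos : F + PSD n ⊆ F) (hne : F.Nonempty) (hproper : F ≠ Set.univ) :
    F = closure (interior F) := by
  refine Set.Subset.antisymm ?_ (closure_minimal interior_subset hcl)
  intro A hA
  -- the family of shifted matrices
  have hsa : ∀ ε : ℝ, (ε • 1 : Matrix (Fin n) (Fin n) ℝ) ∈
      selfAdjoint (Matrix (Fin n) (Fin n) ℝ) := fun ε => by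
    simp only [selfAdjoint.mem_iff, star_smul, star_one, star_trivial]
  set f : ℝ → SymMat n := fun ε => A + ⟨ε • 1, hsa ε⟩ with hf
  -- f is continuous
  have hfc : Continuous f := by
    refine continuous_const.add ?_
    refine Continuous.subtype_mk ?_ _
    exact continuous_id.smul continuous_const
  have hf0 : f 0 = A := by
    apply Subtype.ext
    simp [hf]
  -- f ε ∈ interior F for ε > 0
  have hmem : ∀ ε : ℝ, 0 < ε → f ε ∈ interior F := by
    intro ε hε
    have hopen : IsOpen ((fun B => A + B) '' interior (PSD n)) :=
      (Homeomorph.addLeft A).isOpenMap _ isOpen_interior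
    have hsub : (fun B => A + B) '' interior (PSD n) ⊆ F := by
      rintro _ ⟨u, hu, rfl⟩
      exact hpos (Set.add_mem_add hA (interior_subset hu))
    have hin : f ε ∈ (fun B => A + B) '' interior (PSD n) :=
      ⟨_, smul_one_mem_interior_PSD n ε hε, rfl⟩
    exact interior_maximal hsub hopen hin
  have htend : Filter.Tendsto f (𝓝[>] (0:ℝ)) (𝓝 A) := by
    rw [← hf0]
    exact (hfc.tendsto 0).mono_left nhdsWithin_le_nhds
  refine mem_closure_of_tendsto htend ?_
  filter_upwards [self_mem_nhdsWithin] with ε hε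
  exact hmem ε hε
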